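/- Let ν ∈ ℝ and let Π be a Borel measure on ℝ with Π({0}) = 0, ∫_{(−1,1)} |x| Π(dx) < ∞ and Π((−1, 0)) > 0, and set Π^ν(dx) = e^{νx} Π(dx). For x ∈ (0,1) define I(x) = ∫₀ˣ Π((−1, −y)) dy and I^ν(x) = ∫₀ˣ Π^ν((−1, −y)) dy; then I(x) and I^ν(x) are finite and strictly positive for every x ∈ (0,1), and ∫_{(0,1)} (x / I(x)) Π(dx) < ∞ if and only if ∫_{(0,1)} (x / I^ν(x)) Π^ν(dx) < ∞. -/

import Mathlib

open MeasureTheory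

open scoped ENNReal

/-- Finiteness of `I(x) = ∫₀ˣ Λ((-1,-y)) dy`, by the layer-cake formula. -/
lemma aux_Ifin (Λ : Measure ℝ)
    (hΛ : ∫⁻ x in Set.Ioo (-1 : ℝ) 1, ENNReal.ofReal |x| ∂Λ < ⊤) (x : ℝ) :
    ∫⁻ y in Set.Ioo (0 : ℝ) x, Λ (Set.Ioo (-1 : ℝ) (-y)) < ⊤ := by
  set μ : Measure ℝ := Λ.restrict (Set.Ioo (-1 : ℝ) 0) with hμ
  have hnn : 0 ≤ᵐ[μ] fun a : ℝ => -a := by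
    filter_upwards [ae_restrict_mem measurableSet_Ioo] with z hz
    simp only [Pi.zero_apply]
    linarith [hz.2]
  have hcake := lintegral_eq_lintegral_meas_lt μ hnn measurable_neg.aemeasurable
  have hpt : ∀ y ∈ Set.Ioi (0 : ℝ), Λ (Set.Ioo (-1 : ℝ) (-y)) = μ {a : ℝ | y < -a} := by
    intro y hy
    rw [hμ, Measure.restrict_apply' measurableSet_Ioo]
    congr 1
    ext z
    simp only [Set.mem_Ioo, Set.mem_setOf_eq, Set.mem_inter_iff]
    constructor
    · rintro ⟨h1, h2⟩
      exact ⟨by linarith, h1, by simp at hy; linarith⟩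
    · rintro ⟨h1, h2, h3⟩
      exact ⟨h2, by linarith⟩
  calc ∫⁻ y in Set.Ioo (0 : ℝ) x, Λ (Set.Ioo (-1 : ℝ) (-y))
      ≤ ∫⁻ y in Set.Ioi (0 : ℝ), Λ (Set.Ioo (-1 : ℝ) (-y)) :=
        lintegral_mono_set Set.Ioo_subset_Ioi_self
    _ = ∫⁻ y in Set.Ioi (0 : ℝ), μ {a : ℝ | y < -a} :=
        setLIntegral_congr_fun measurableSet_Ioi hpt
    _ = ∫⁻ a, ENNReal.ofReal (-a) ∂μ := hcake.symm
    _ ≤ ∫⁻ a, ENNReal.ofReal |a| ∂μ :=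
        lintegral_mono fun a => ENNReal.ofReal_le_ofReal (neg_le_abs a)
    _ ≤ ∫⁻ a in Set.Ioo (-1 : ℝ) 1, ENNReal.ofReal |a| ∂Λ := by
        rw [hμ]
        exact lintegral_mono_set (Set.Ioo_subset_Ioo le_rfl (by norm_num))
    _ < ⊤ := hΛ

/-- Positivity of `I(x)`. -/
lemma aux_Ipos (Λ : Measure ℝ) (hneg : 0 < Λ (Set.Ioo (-1 : ℝ) 0))
    {x : ℝ} (hx : 0 < x) :
    0 < ∫⁻ y in Set.Ioo (0 : ℝ) x, Λ (Set.Ioo (-1 : ℝ) (-y)) := by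
  have hsub : Set.Ioo (-1 : ℝ) 0 ⊆ ⋃ n : ℕ, Set.Ioo (-1 : ℝ) (-(1 / (n + 1))) := by
    intro z hz
    obtain ⟨n, hn⟩ := exists_nat_one_div_lt (show (0:ℝ) < -z by linarith [hz.2])
    exact Set.mem_iUnion.2 ⟨n, hz.1, by linarith⟩
  have hex : ∃ n : ℕ, 0 < Λ (Set.Ioo (-1 : ℝ) (-(1 / (n + 1)))) := by
    by_contra h
    push_neg at h
    simp only [le_zero_iff] at h
    exact absurd (le_trans (measure_mono hsub) (le_of_eq (measure_iUnion_null h)))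
      (by simpa using hneg.not_ge)
  obtain ⟨n, hn⟩ := hex
  set t : ℝ := 1 / (n + 1) with ht
  have ht0 : 0 < t := by positivity
  set s : ℝ := min t (x / 2) with hs
  have hs0 : 0 < s := lt_min ht0 (by linarith)
  have hsx : s < x := lt_of_le_of_lt (min_le_right _ _) (by linarith)
  have hst : s ≤ t := min_le_left _ _
  have hΛs : 0 < Λ (Set.Ioo (-1 : ℝ) (-s)) :=
    lt_of_lt_of_le hn (measure_mono (Set.Ioo_subset_Ioo le_rfl (by linarith)))
  calc (0 : ℝ≥0∞) < Λ (Set.Ioo (-1 : ℝ) (-s)) * ENNReal.ofReal s :=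
        ENNReal.mul_pos hΛs.ne' (ENNReal.ofReal_pos.2 hs0).ne'
    _ = ∫⁻ _ in Set.Ioo (0 : ℝ) s, Λ (Set.Ioo (-1 : ℝ) (-s)) := by
        rw [setLIntegral_const, Real.volume_Ioo]; norm_num
    _ ≤ ∫⁻ y in Set.Ioo (0 : ℝ) s, Λ (Set.Ioo (-1 : ℝ) (-y)) :=
        setLIntegral_mono' measurableSet_Ioo fun y hy =>
          measure_mono (Set.Ioo_subset_Ioo le_rfl (by linarith [hy.2]))
    _ ≤ ∫⁻ y in Set.Ioo (0 : ℝ) x, Λ (Set.Ioo (-1 : ℝ) (-y)) :=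
        lintegral_mono_set (Set.Ioo_subset_Ioo le_rfl hsx.le)

lemma aux_dmeas (ν : ℝ) :
    Measurable fun z : ℝ => ENNReal.ofReal (Real.exp (ν * z)) :=
  ENNReal.measurable_ofReal.comp (Real.measurable_exp.comp (measurable_const.mul measurable_id))

/-- The exponential density is bounded between `e^{-|ν|}` and `e^{|ν|}` on `(-1,1)`. -/
lemma aux_exp_bnd (ν : ℝ) {y : ℝ} (hy : y ∈ Set.Ioo (-1 : ℝ) 1) :
    ENNReal.ofReal (Real.exp (-|ν|)) ≤ ENNReal.ofReal (Real.exp (ν * y)) ∧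
    ENNReal.ofReal (Real.exp (ν * y)) ≤ ENNReal.ofReal (Real.exp |ν|) := by
  have h1 : |ν * y| ≤ |ν| := by
    rw [abs_mul]
    have : |y| ≤ 1 := abs_le.2 ⟨hy.1.le, hy.2.le⟩
    calc |ν| * |y| ≤ |ν| * 1 := by gcongr
      _ = |ν| := mul_one _
  constructor
  · exact ENNReal.ofReal_le_ofReal (Real.exp_le_exp.2 (by linarith [neg_le_of_abs_le h1]))
  · exact ENNReal.ofReal_le_ofReal (Real.exp_le_exp.2 (le_of_abs_le h1))

/-- Two-sided density bound for the tilted measure on subsets of `(-1,1)`. -/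
lemma aux_sandwich_set (Λ : Measure ℝ) (ν : ℝ) {S : Set ℝ} (hS : MeasurableSet S)
    (hsub : S ⊆ Set.Ioo (-1 : ℝ) 1) :
    ENNReal.ofReal (Real.exp (-|ν|)) * Λ S ≤
      (Λ.withDensity fun z => ENNReal.ofReal (Real.exp (ν * z))) S ∧
    (Λ.withDensity fun z => ENNReal.ofReal (Real.exp (ν * z))) S ≤
      ENNReal.ofReal (Real.exp |ν|) * Λ S := by
  rw [withDensity_apply _ hS]
  constructor
  · calc ENNReal.ofReal (Real.exp (-|ν|)) * Λ S
        = ∫⁻ _ in S, ENNReal.ofReal (Real.exp (-|ν|)) ∂Λ := (setLIntegral_const _ _).symm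
      _ ≤ ∫⁻ z in S, ENNReal.ofReal (Real.exp (ν * z)) ∂Λ :=
          setLIntegral_mono' hS fun z hz => (aux_exp_bnd ν (hsub hz)).1
  · calc ∫⁻ z in S, ENNReal.ofReal (Real.exp (ν * z)) ∂Λ
        ≤ ∫⁻ _ in S, ENNReal.ofReal (Real.exp |ν|) ∂Λ :=
          setLIntegral_mono' hS fun z hz => (aux_exp_bnd ν (hsub hz)).2
      _ = ENNReal.ofReal (Real.exp |ν|) * Λ S := setLIntegral_const _ _

/-- Sandwich (with a volume base) for the tilted `I^ν` in terms of `I`. -/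
lemma aux_sandwich_I (Λ : Measure ℝ) (ν : ℝ) {x : ℝ} (hx : 0 < x) :
    ENNReal.ofReal (Real.exp (-|ν|)) *
        (∫⁻ y in Set.Ioo (0 : ℝ) x, Λ (Set.Ioo (-1 : ℝ) (-y))) ≤
      (∫⁻ y in Set.Ioo (0 : ℝ) x,
        (Λ.withDensity fun z => ENNReal.ofReal (Real.exp (ν * z)))
          (Set.Ioo (-1 : ℝ) (-y))) ∧
    (∫⁻ y in Set.Ioo (0 : ℝ) x,
        (Λ.withDensity fun z => ENNReal.ofReal (Real.exp (ν * z)))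
          (Set.Ioo (-1 : ℝ) (-y))) ≤
      ENNReal.ofReal (Real.exp |ν|) *
        (∫⁻ y in Set.Ioo (0 : ℝ) x, Λ (Set.Ioo (-1 : ℝ) (-y))) := by
  have hsub : ∀ y ∈ Set.Ioo (0 : ℝ) x, Set.Ioo (-1 : ℝ) (-y) ⊆ Set.Ioo (-1 : ℝ) 1 :=
    fun y hy => Set.Ioo_subset_Ioo le_rfl (by linarith [hy.1])
  constructor
  · rw [← lintegral_const_mul' _ _ ENNReal.ofReal_ne_top]
    exact setLIntegral_mono' measurableSet_Ioo fun y hy =>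
      (aux_sandwich_set Λ ν measurableSet_Ioo (hsub y hy)).1
  · rw [← lintegral_const_mul' _ _ ENNReal.ofReal_ne_top]
    exact setLIntegral_mono' measurableSet_Ioo fun y hy =>
      (aux_sandwich_set Λ ν measurableSet_Ioo (hsub y hy)).2

/-- Sandwich for the doubly tilted quantity `Ĩ^ν(x) = ∫ Λ^ν((-1,-y)) Λ^ν(dy)` over `(0,x)`. -/
lemma aux_sandwich_J (Λ : Measure ℝ) (ν : ℝ) {x : ℝ} (hx1 : x ≤ 1) :
    ENNReal.ofReal (Real.exp (-|ν|)) * ENNReal.ofReal (Real.exp (-|ν|)) *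
        (∫⁻ y in Set.Ioo (0 : ℝ) x, Λ (Set.Ioo (-1 : ℝ) (-y)) ∂Λ) ≤
      (∫⁻ y in Set.Ioo (0 : ℝ) x,
        (Λ.withDensity fun z => ENNReal.ofReal (Real.exp (ν * z)))
          (Set.Ioo (-1 : ℝ) (-y))
        ∂(Λ.withDensity fun z => ENNReal.ofReal (Real.exp (ν * z)))) ∧
    (∫⁻ y in Set.Ioo (0 : ℝ) x,
        (Λ.withDensity fun z => ENNReal.ofReal (Real.exp (ν * z)))
          (Set.Ioo (-1 : ℝ) (-y))
        ∂(Λ.withDensity fun z => ENNReal.ofReal (Real.exp (ν * z)))) ≤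
      ENNReal.ofReal (Real.exp |ν|) * ENNReal.ofReal (Real.exp |ν|) *
        (∫⁻ y in Set.Ioo (0 : ℝ) x, Λ (Set.Ioo (-1 : ℝ) (-y)) ∂Λ) := by
  have hT : (∫⁻ y in Set.Ioo (0 : ℝ) x,
        (Λ.withDensity fun z => ENNReal.ofReal (Real.exp (ν * z)))
          (Set.Ioo (-1 : ℝ) (-y))
        ∂(Λ.withDensity fun z => ENNReal.ofReal (Real.exp (ν * z)))) =
      ∫⁻ y in Set.Ioo (0 : ℝ) x,
        ENNReal.ofReal (Real.exp (ν * y)) *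
          (Λ.withDensity fun z => ENNReal.ofReal (Real.exp (ν * z)))
            (Set.Ioo (-1 : ℝ) (-y)) ∂Λ := by
    rw [restrict_withDensity measurableSet_Ioo,
      lintegral_withDensity_eq_lintegral_mul_non_measurable _ (aux_dmeas ν)
        (ae_of_all _ fun z => ENNReal.ofReal_lt_top)]
    rfl
  have hmem : ∀ y ∈ Set.Ioo (0 : ℝ) x, y ∈ Set.Ioo (-1 : ℝ) 1 :=
    fun y hy => ⟨by linarith [hy.1], lt_of_lt_of_le hy.2 hx1⟩
  have hsub : ∀ y ∈ Set.Ioo (0 : ℝ) x, Set.Ioo (-1 : ℝ) (-y) ⊆ Set.Ioo (-1 : ℝ) 1 :=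
    fun y hy => Set.Ioo_subset_Ioo le_rfl (by linarith [hy.1])
  rw [hT]
  constructor
  · rw [← lintegral_const_mul' _ _ (ENNReal.mul_ne_top ENNReal.ofReal_ne_top
      ENNReal.ofReal_ne_top)]
    refine setLIntegral_mono' measurableSet_Ioo fun y hy => ?_
    have hd := (aux_exp_bnd ν (hmem y hy)).1
    have hm := (aux_sandwich_set Λ ν measurableSet_Ioo (hsub y hy)).1
    calc ENNReal.ofReal (Real.exp (-|ν|)) * ENNReal.ofReal (Real.exp (-|ν|)) *
          Λ (Set.Ioo (-1 : ℝ) (-y))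
        = ENNReal.ofReal (Real.exp (-|ν|)) *
            (ENNReal.ofReal (Real.exp (-|ν|)) * Λ (Set.Ioo (-1 : ℝ) (-y))) := by ring
      _ ≤ ENNReal.ofReal (Real.exp (ν * y)) *
            (ENNReal.ofReal (Real.exp (-|ν|)) * Λ (Set.Ioo (-1 : ℝ) (-y))) :=
          mul_le_mul_left hd _
      _ ≤ ENNReal.ofReal (Real.exp (ν * y)) *
            (Λ.withDensity fun z => ENNReal.ofReal (Real.exp (ν * z)))
              (Set.Ioo (-1 : ℝ) (-y)) := mul_le_mul_right hm _
  · rw [← lintegral_const_mul' _ _ (ENNReal.mul_ne_top ENNReal.ofReal_ne_top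
      ENNReal.ofReal_ne_top)]
    refine setLIntegral_mono' measurableSet_Ioo fun y hy => ?_
    have hd := (aux_exp_bnd ν (hmem y hy)).2
    have hm := (aux_sandwich_set Λ ν measurableSet_Ioo (hsub y hy)).2
    calc ENNReal.ofReal (Real.exp (ν * y)) *
          (Λ.withDensity fun z => ENNReal.ofReal (Real.exp (ν * z)))
            (Set.Ioo (-1 : ℝ) (-y))
        ≤ ENNReal.ofReal (Real.exp |ν|) *
            (Λ.withDensity fun z => ENNReal.ofReal (Real.exp (ν * z)))
              (Set.Ioo (-1 : ℝ) (-y)) := mul_le_mul_left hd _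
      _ ≤ ENNReal.ofReal (Real.exp |ν|) *
            (ENNReal.ofReal (Real.exp |ν|) * Λ (Set.Ioo (-1 : ℝ) (-y))) :=
          mul_le_mul_right hm _
      _ = ENNReal.ofReal (Real.exp |ν|) * ENNReal.ofReal (Real.exp |ν|) *
            Λ (Set.Ioo (-1 : ℝ) (-y)) := by ring

/-- Irregularity upwards is preserved by exponential tilting: with
`I(x) = ∫₀ˣ Λ((-1,-y)) dy` and `I^ν(x) = ∫₀ˣ Λ^ν((-1,-y)) dy` (where
`Λ^ν(dx) = e^{νx} Λ(dx)`), both are finite and strictly positive for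
`x ∈ (0,1)`, and `∫_{(0,1)} x/I(x) Λ(dx) < ∞` iff
`∫_{(0,1)} x/I^ν(x) Λ^ν(dx) < ∞`. -/
theorem regularity_integral_test_tilting
    (Λ : Measure ℝ) (hΛ0 : Λ {0} = 0)
    (hΛ : ∫⁻ x in Set.Ioo (-1 : ℝ) 1, ENNReal.ofReal |x| ∂Λ < ⊤)
    (hneg : 0 < Λ (Set.Ioo (-1 : ℝ) 0))
    (ν : ℝ) :
    (∀ x ∈ Set.Ioo (0 : ℝ) 1,
      (∫⁻ y in Set.Ioo (0 : ℝ) x, Λ (Set.Ioo (-1 : ℝ) (-y))) ∈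
          Set.Ioo (0 : ENNReal) ⊤ ∧
      (∫⁻ y in Set.Ioo (0 : ℝ) x,
          (Λ.withDensity fun z => ENNReal.ofReal (Real.exp (ν * z)))
            (Set.Ioo (-1 : ℝ) (-y))) ∈ Set.Ioo (0 : ENNReal) ⊤) ∧
    ((∫⁻ x in Set.Ioo (0 : ℝ) 1,
        ENNReal.ofReal x / ∫⁻ y in Set.Ioo (0 : ℝ) x, Λ (Set.Ioo (-1 : ℝ) (-y)) ∂Λ) < ⊤ ↔
      (∫⁻ x in Set.Ioo (0 : ℝ) 1,
        ENNReal.ofReal x / ∫⁻ y in Set.Ioo (0 : ℝ) x,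
            (Λ.withDensity fun z => ENNReal.ofReal (Real.exp (ν * z)))
              (Set.Ioo (-1 : ℝ) (-y))
          ∂(Λ.withDensity fun z => ENNReal.ofReal (Real.exp (ν * z)))) < ⊤) := by
  have hc0 : ENNReal.ofReal (Real.exp (-|ν|)) ≠ 0 :=
    (ENNReal.ofReal_pos.2 (Real.exp_pos _)).ne'
  have hcT : ENNReal.ofReal (Real.exp (-|ν|)) ≠ ⊤ := ENNReal.ofReal_ne_top
  have hC0 : ENNReal.ofReal (Real.exp |ν|) ≠ 0 :=
    (ENNReal.ofReal_pos.2 (Real.exp_pos _)).ne'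
  have hCT : ENNReal.ofReal (Real.exp |ν|) ≠ ⊤ := ENNReal.ofReal_ne_top
  have hc20 : ENNReal.ofReal (Real.exp (-|ν|)) * ENNReal.ofReal (Real.exp (-|ν|)) ≠ 0 :=
    mul_ne_zero hc0 hc0
  have hc2T : ENNReal.ofReal (Real.exp (-|ν|)) * ENNReal.ofReal (Real.exp (-|ν|)) ≠ ⊤ :=
    ENNReal.mul_ne_top hcT hcT
  have hC20 : ENNReal.ofReal (Real.exp |ν|) * ENNReal.ofReal (Real.exp |ν|) ≠ 0 :=
    mul_ne_zero hC0 hC0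
  have hC2T : ENNReal.ofReal (Real.exp |ν|) * ENNReal.ofReal (Real.exp |ν|) ≠ ⊤ :=
    ENNReal.mul_ne_top hCT hCT
  constructor
  · intro x hx
    have hIf := aux_Ifin Λ hΛ x
    have hIp := aux_Ipos Λ hneg hx.1
    have hs := aux_sandwich_I Λ ν (x := x) hx.1
    exact ⟨⟨hIp, hIf⟩,
      lt_of_lt_of_le (ENNReal.mul_pos hc0 hIp.ne') hs.1,
      lt_of_le_of_lt hs.2 (ENNReal.mul_lt_top hCT.lt_top hIf)⟩
  · constructor
    · intro hJ
      calc (∫⁻ x in Set.Ioo (0 : ℝ) 1,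
            ENNReal.ofReal x / ∫⁻ y in Set.Ioo (0 : ℝ) x,
              (Λ.withDensity fun z => ENNReal.ofReal (Real.exp (ν * z)))
                (Set.Ioo (-1 : ℝ) (-y))
              ∂(Λ.withDensity fun z => ENNReal.ofReal (Real.exp (ν * z))))
          ≤ ∫⁻ x in Set.Ioo (0 : ℝ) 1,
              (ENNReal.ofReal (Real.exp (-|ν|)) * ENNReal.ofReal (Real.exp (-|ν|)))⁻¹ *
                (ENNReal.ofReal x /
                  ∫⁻ y in Set.Ioo (0 : ℝ) x, Λ (Set.Ioo (-1 : ℝ) (-y)) ∂Λ) := by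
            refine setLIntegral_mono' measurableSet_Ioo fun x hx => ?_
            have h2 := ENNReal.div_le_div_left (aux_sandwich_J Λ ν (x := x) hx.2.le).1
              (ENNReal.ofReal x)
            refine h2.trans (le_of_eq ?_)
            rw [div_eq_mul_inv,
              ENNReal.mul_inv (Or.inl hc20) (Or.inl hc2T), div_eq_mul_inv]
            ring
        _ = (ENNReal.ofReal (Real.exp (-|ν|)) * ENNReal.ofReal (Real.exp (-|ν|)))⁻¹ *
              ∫⁻ x in Set.Ioo (0 : ℝ) 1, ENNReal.ofReal x /
                ∫⁻ y in Set.Ioo (0 : ℝ) x, Λ (Set.Ioo (-1 : ℝ) (-y)) ∂Λ :=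
            lintegral_const_mul' _ _ (ENNReal.inv_ne_top.2 hc20)
        _ < ⊤ := ENNReal.mul_lt_top (ENNReal.inv_ne_top.2 hc20).lt_top hJ
    · intro hJν
      calc (∫⁻ x in Set.Ioo (0 : ℝ) 1,
            ENNReal.ofReal x / ∫⁻ y in Set.Ioo (0 : ℝ) x, Λ (Set.Ioo (-1 : ℝ) (-y)) ∂Λ)
          ≤ ∫⁻ x in Set.Ioo (0 : ℝ) 1,
              (ENNReal.ofReal (Real.exp |ν|) * ENNReal.ofReal (Real.exp |ν|)) *
                (ENNReal.ofReal x / ∫⁻ y in Set.Ioo (0 : ℝ) x,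
                  (Λ.withDensity fun z => ENNReal.ofReal (Real.exp (ν * z)))
                    (Set.Ioo (-1 : ℝ) (-y))
                  ∂(Λ.withDensity fun z => ENNReal.ofReal (Real.exp (ν * z)))) := by
            refine setLIntegral_mono' measurableSet_Ioo fun x hx => ?_
            have ha : ENNReal.ofReal x /
                  (∫⁻ y in Set.Ioo (0 : ℝ) x, Λ (Set.Ioo (-1 : ℝ) (-y)) ∂Λ) =
                (ENNReal.ofReal (Real.exp |ν|) * ENNReal.ofReal (Real.exp |ν|)) *
                  (ENNReal.ofReal x /
                    ((ENNReal.ofReal (Real.exp |ν|) * ENNReal.ofReal (Real.exp |ν|)) *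
                      ∫⁻ y in Set.Ioo (0 : ℝ) x, Λ (Set.Ioo (-1 : ℝ) (-y)) ∂Λ)) := by
              rw [div_eq_mul_inv, div_eq_mul_inv,
                ENNReal.mul_inv (Or.inl hC20) (Or.inl hC2T)]
              calc ENNReal.ofReal x *
                    (∫⁻ y in Set.Ioo (0 : ℝ) x, Λ (Set.Ioo (-1 : ℝ) (-y)) ∂Λ)⁻¹
                  = ((ENNReal.ofReal (Real.exp |ν|) * ENNReal.ofReal (Real.exp |ν|)) *
                      (ENNReal.ofReal (Real.exp |ν|) * ENNReal.ofReal (Real.exp |ν|))⁻¹) *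
                      (ENNReal.ofReal x *
                        (∫⁻ y in Set.Ioo (0 : ℝ) x, Λ (Set.Ioo (-1 : ℝ) (-y)) ∂Λ)⁻¹) := by
                    rw [ENNReal.mul_inv_cancel hC20 hC2T, one_mul]
                _ = (ENNReal.ofReal (Real.exp |ν|) * ENNReal.ofReal (Real.exp |ν|)) *
                      (ENNReal.ofReal x *
                        ((ENNReal.ofReal (Real.exp |ν|) * ENNReal.ofReal (Real.exp |ν|))⁻¹ *
                          (∫⁻ y in Set.Ioo (0 : ℝ) x, Λ (Set.Ioo (-1 : ℝ) (-y)) ∂Λ)⁻¹)) := by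
                    ring
            rw [ha]
            exact mul_le_mul_right
              (ENNReal.div_le_div_left (aux_sandwich_J Λ ν (x := x) hx.2.le).2 _) _
        _ = (ENNReal.ofReal (Real.exp |ν|) * ENNReal.ofReal (Real.exp |ν|)) *
              ∫⁻ x in Set.Ioo (0 : ℝ) 1, ENNReal.ofReal x /
                ∫⁻ y in Set.Ioo (0 : ℝ) x,
                  (Λ.withDensity fun z => ENNReal.ofReal (Real.exp (ν * z)))
                    (Set.Ioo (-1 : ℝ) (-y))
                  ∂(Λ.withDensity fun z => ENNReal.ofReal (Real.exp (ν * z))) :=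
            lintegral_const_mul' _ _ hC2T
        _ < ⊤ := ENNReal.mul_lt_top hC2T.lt_top hJν
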